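/- Let X be a Banach lattice, 0 < δ ≤ 1, and for each n let {y_σ : |σ| = n} be pairwise disjoint positive vectors indexed by binary strings of length n such that y_σ = y_{σ⌢0} + y_{σ⌢1} and δ ≤ ‖y_σ‖ ≤ 1 for all σ. Then for every n and scalars (a_σ)_{|σ|=n}, δ·max_{|σ|=n}|a_σ| ≤ ‖Σ_{|σ|=n} a_σ y_σ‖ ≤ max_{|σ|=n}|a_σ|, and consequently the closed sublattice generated by all y_σ is lattice isomorphic to C(Δ), where Δ is the Cantor set. -/

import Mathlib

/-- The Cantor space `Δ = 2^ℕ`. -/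
abbrev Cantor : Type := ℕ → Bool

open Filter Topology


section LatticeHelpers

variable {α : Type*} [Lattice α] [AddCommGroup α]
  [CovariantClass α α (· + ·) (· ≤ ·)]

lemma my_inf_add_zero {a b c : α} (ha : 0 ≤ a) (hb : 0 ≤ b) (hc : 0 ≤ c)
    (hab : a ⊓ b = 0) (hac : a ⊓ c = 0) : a ⊓ (b + c) = 0 := by
  set d := a ⊓ (b + c) with hd
  have h1 : d - c ≤ a ⊓ b := by
    apply le_inf
    · exact le_trans (sub_le_self _ hc) inf_le_left
    · exact sub_le_iff_le_add.2 inf_le_right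
  have h2 : d ≤ c := sub_nonpos.1 (hab ▸ h1)
  have h3 : d ≤ a ⊓ c := le_inf inf_le_left h2
  have h4 : 0 ≤ d := le_inf ha (add_nonneg hb hc)
  exact le_antisymm (hac ▸ h3) h4

lemma my_inf_nsmul_zero {a b : α} (ha : 0 ≤ a) (hb : 0 ≤ b) (hab : a ⊓ b = 0) :
    ∀ n : ℕ, a ⊓ (n • b) = 0
  | 0 => by simpa using inf_eq_right.2 ha
  | (n + 1) => by
      have := my_inf_nsmul_zero ha hb hab n
      rw [succ_nsmul]
      exact my_inf_add_zero ha (nsmul_nonneg hb n) hb this hab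

lemma my_inf_nsmul_nsmul_zero {a b : α} (ha : 0 ≤ a) (hb : 0 ≤ b) (hab : a ⊓ b = 0)
    (m n : ℕ) : (m • a) ⊓ (n • b) = 0 := by
  have h1 : a ⊓ (n • b) = 0 := my_inf_nsmul_zero ha hb hab n
  have := my_inf_nsmul_zero (nsmul_nonneg hb n) ha (by rw [inf_comm]; exact h1) m
  rw [inf_comm] at this
  exact this

lemma my_nonneg_of_nsmul_nonneg {x : α} {n : ℕ} (hn : 0 < n) (h : 0 ≤ n • x) : 0 ≤ x := by
  have hdec : x⁺ - x⁻ = x := posPart_sub_negPart x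
  have hdisj : x⁺ ⊓ x⁻ = 0 := posPart_inf_negPart_eq_zero x
  have hp : (0:α) ≤ x⁺ := posPart_nonneg x
  have hq : (0:α) ≤ x⁻ := negPart_nonneg x
  have hle : n • x⁻ ≤ n • x⁺ := by
    have : n • x = n • x⁺ - n • x⁻ := by rw [← smul_sub, hdec]
    rw [this] at h
    exact sub_nonneg.1 h
  have hinf : (n • x⁺) ⊓ (n • x⁻) = 0 := my_inf_nsmul_nsmul_zero hp hq hdisj n n
  have hzero : n • x⁻ = 0 := by
    have : n • x⁻ ≤ (n • x⁺) ⊓ (n • x⁻) := le_inf hle le_rfl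
    exact le_antisymm (hinf ▸ this) (nsmul_nonneg hq n)
  have hq0 : x⁻ = 0 := by
    have h1 : (1:ℕ) • x⁻ ≤ n • x⁻ := nsmul_le_nsmul_left hq hn
    rw [one_nsmul, hzero] at h1
    exact le_antisymm h1 hq
  rw [← hdec, hq0, sub_zero]
  exact hp

end LatticeHelpers

section SmulHelpers

variable {X : Type} [NormedAddCommGroup X] [Lattice X] [HasSolidNorm X]
  [IsOrderedAddMonoid X] [NormedSpace ℝ X]

lemma my_smul_nonneg {c : ℝ} (hc : 0 ≤ c) {x : X} (hx : 0 ≤ x) : 0 ≤ c • x := by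
  -- dyadic approximation from above
  have key : ∀ q : ℝ, (∃ m k : ℕ, 0 < k ∧ q = (m : ℝ) / (k : ℝ)) → 0 ≤ q • x := by
    rintro q ⟨m, k, hk, rfl⟩
    have hk' : (0:ℝ) < (k:ℝ) := by exact_mod_cast hk
    apply my_nonneg_of_nsmul_nonneg hk
    have : k • (((m : ℝ) / (k : ℝ)) • x) = m • x := by
      rw [← Nat.cast_smul_eq_nsmul ℝ k, ← Nat.cast_smul_eq_nsmul ℝ m, smul_smul]
      congr 1
      field_simp
    rw [this]
    exact nsmul_nonneg hx m
  set u : ℕ → ℝ := fun n => ((⌈c * 2 ^ n⌉₊ : ℝ)) / (2 ^ n : ℝ) with hu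
  have hun : ∀ n, 0 ≤ u n • x := by
    intro n
    apply key
    exact ⟨⌈c * 2 ^ n⌉₊, 2 ^ n, pow_pos two_pos n, by push_cast; ring⟩
  have h2 : ∀ n : ℕ, (0:ℝ) < (2:ℝ) ^ n := fun n => by positivity
  have hlow : ∀ n, c ≤ u n := by
    intro n
    rw [hu, le_div_iff₀ (h2 n)]
    exact Nat.le_ceil _
  have hhigh : ∀ n, u n ≤ c + (1/2) ^ n := by
    intro n
    rw [hu, div_le_iff₀ (h2 n)]
    have := (Nat.ceil_lt_add_one (by positivity : (0:ℝ) ≤ c * 2 ^ n)).le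
    calc ((⌈c * 2 ^ n⌉₊ : ℝ)) ≤ c * 2 ^ n + 1 := this
      _ = (c + (1/2)^n) * 2 ^ n := by
          rw [add_mul, ← mul_pow]; norm_num
  have hth : Tendsto u atTop (𝓝 c) := by
    have h0 : Tendsto (fun n : ℕ => c + (1/2:ℝ) ^ n) atTop (𝓝 (c + 0)) :=
      tendsto_const_nhds.add (tendsto_pow_atTop_nhds_zero_of_lt_one (by norm_num) (by norm_num))
    rw [add_zero] at h0
    exact tendsto_of_tendsto_of_tendsto_of_le_of_le tendsto_const_nhds h0 hlow hhigh
  have hts : Tendsto (fun n => u n • x) atTop (𝓝 (c • x)) := hth.smul_const x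
  have hcl : IsClosed {z : X | 0 ≤ z} := isClosed_Ici
  exact hcl.mem_of_tendsto hts (Eventually.of_forall hun)

lemma my_smul_mono_left {c d : ℝ} {x : X} (hx : 0 ≤ x) (h : c ≤ d) : c • x ≤ d • x := by
  have := my_smul_nonneg (sub_nonneg.2 h) hx
  rw [sub_smul] at this
  exact sub_nonneg.1 this

lemma my_smul_mono_right {c : ℝ} {x z : X} (hc : 0 ≤ c) (h : x ≤ z) : c • x ≤ c • z := by
  have := my_smul_nonneg hc (sub_nonneg.2 h)
  rw [smul_sub] at this
  exact sub_nonneg.1 this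

lemma my_abs_smul {c : ℝ} {x : X} (hx : 0 ≤ x) : |c • x| = |c| • x := by
  apply le_antisymm
  · rw [abs_le']
    constructor
    · exact my_smul_mono_left hx (le_abs_self c)
    · rw [← neg_smul]
      exact my_smul_mono_left hx (neg_le_abs c)
  · rcases abs_choice c with h | h
    · rw [h]; exact le_abs_self _
    · rw [h, neg_smul]; exact neg_le_abs _

lemma my_inf_smul_zero {u v : X} (hu : 0 ≤ u) (hv : 0 ≤ v) (huv : u ⊓ v = 0)
    {c d : ℝ} (hc : 0 ≤ c) (hd : 0 ≤ d) : (c • u) ⊓ (d • v) = 0 := by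
  set N : ℕ := ⌈max c d⌉₊ with hN
  have hcu : c • u ≤ N • u := by
    rw [← Nat.cast_smul_eq_nsmul ℝ]
    exact my_smul_mono_left hu (le_trans (le_max_left c d) (Nat.le_ceil _))
  have hdv : d • v ≤ N • v := by
    rw [← Nat.cast_smul_eq_nsmul ℝ]
    exact my_smul_mono_left hv (le_trans (le_max_right c d) (Nat.le_ceil _))
  have h0 : (0:X) ≤ (c • u) ⊓ (d • v) := le_inf (my_smul_nonneg hc hu) (my_smul_nonneg hd hv)
  have h1 : (c • u) ⊓ (d • v) ≤ (N • u) ⊓ (N • v) := inf_le_inf hcu hdv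
  rw [my_inf_nsmul_nsmul_zero hu hv huv N N] at h1
  exact le_antisymm h1 h0

lemma my_abs_add_disjoint {u v : X} (h : |u| ⊓ |v| = 0) : |u + v| = |u| + |v| := by
  apply le_antisymm (abs_add_le u v)
  have h1 : |u| + |v| = |u| ⊔ |v| := by
    rw [← inf_add_sup |u| |v|, h, zero_add]
  have h2 : |u| ⊔ |v| = |(|v| - |u|)| := by
    have := sup_sub_inf_eq_abs_sub |u| |v|
    rw [h, sub_zero] at this
    exact this
  have h3 : |(|v| - |u|)| ≤ |u + v| := by
    have := abs_abs_sub_abs_le v (-u)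
    rw [abs_neg, sub_neg_eq_add, add_comm] at this
    exact this
  rw [h1, h2]
  exact h3

lemma my_abs_sum_le {ι : Type*} (s : Finset ι) (f : ι → X) :
    |∑ i ∈ s, f i| ≤ ∑ i ∈ s, |f i| := by
  classical
  induction s using Finset.induction_on with
  | empty => simp
  | insert _ _ hx ih =>
      rw [Finset.sum_insert hx, Finset.sum_insert hx]
      exact le_trans (abs_add_le _ _) (add_le_add_right ih _)

lemma my_inf_sum_zero {ι : Type*} (s : Finset ι) {a : X} (ha : 0 ≤ a) {f : ι → X}
    (hf : ∀ i ∈ s, 0 ≤ f i) (h : ∀ i ∈ s, a ⊓ f i = 0) : a ⊓ ∑ i ∈ s, f i = 0 := by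
  classical
  induction s using Finset.induction_on with
  | empty => simpa using inf_eq_right.2 ha
  | @insert j t hj ih =>
      rw [Finset.sum_insert hj]
      exact my_inf_add_zero ha (hf j (Finset.mem_insert_self j t))
        (Finset.sum_nonneg fun i hi => hf i (Finset.mem_insert_of_mem hi))
        (h j (Finset.mem_insert_self j t))
        (ih (fun i hi => hf i (Finset.mem_insert_of_mem hi))
          (fun i hi => h i (Finset.mem_insert_of_mem hi)))

end SmulHelpers

noncomputable section TreeHelpers

def extFn (n : ℕ) (σ : Fin n → Bool) : Cantor := fun i => if h : i < n then σ ⟨i, h⟩ else false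

def projFn {n m : ℕ} (h : n ≤ m) (σ : Fin m → Bool) : Fin n → Bool :=
  fun i => σ (Fin.castLE h i)

variable {X : Type} [NormedAddCommGroup X] [Lattice X] [HasSolidNorm X]
  [IsOrderedAddMonoid X] [NormedSpace ℝ X]
  (y : ∀ n : ℕ, (Fin n → Bool) → X)

lemma my_sum_step
    (hsplit : ∀ n (σ : Fin n → Bool),
      y n σ = y (n + 1) (Fin.snoc σ false) + y (n + 1) (Fin.snoc σ true))
    (m : ℕ) (b : (Fin m → Bool) → ℝ) :
    ∑ σ : Fin m → Bool, b σ • y m σ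
      = ∑ τ : Fin (m+1) → Bool, b (Fin.init τ) • y (m+1) τ := by
  rw [← Equiv.sum_comp (Fin.snocEquiv (fun _ => Bool))
    (fun τ : Fin (m+1) → Bool => b (Fin.init τ) • y (m+1) τ)]
  rw [Fintype.sum_prod_type, Fintype.sum_bool]
  have h1 : ∀ (c : Bool) (σ : Fin m → Bool),
      Fin.snocEquiv (fun _ => Bool) (c, σ) = Fin.snoc σ c := fun _ _ => rfl
  simp only [h1, Fin.init_snoc]
  rw [← Finset.sum_add_distrib]
  apply Finset.sum_congr rfl
  intro σ _
  rw [← smul_add, hsplit m σ, add_comm]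

lemma my_sum_proj
    (hsplit : ∀ n (σ : Fin n → Bool),
      y n σ = y (n + 1) (Fin.snoc σ false) + y (n + 1) (Fin.snoc σ true))
    {n m : ℕ} (h : n ≤ m) (a : (Fin n → Bool) → ℝ) :
    ∑ σ : Fin n → Bool, a σ • y n σ
      = ∑ τ : Fin m → Bool, a (projFn h τ) • y m τ := by
  induction m, h using Nat.le_induction with
  | base =>
      exact Finset.sum_congr rfl fun σ _ => by congr 1
  | succ m hnm ih =>
      rw [ih, my_sum_step y hsplit m (fun τ => a (projFn hnm τ))]
      exact Finset.sum_congr rfl fun τ _ => by congr 2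

lemma my_sum_total
    (hsplit : ∀ n (σ : Fin n → Bool),
      y n σ = y (n + 1) (Fin.snoc σ false) + y (n + 1) (Fin.snoc σ true))
    (n : ℕ) : ∑ τ : Fin n → Bool, y n τ = y 0 default := by
  have h := my_sum_proj y hsplit (Nat.zero_le n) (fun _ => (1:ℝ))
  simp only [one_smul] at h
  rw [← h, Fintype.sum_unique]
  exact congrArg (y 0) (Subsingleton.elim _ _)

/-- Main upper bound. -/
lemma my_norm_sum_le
    (hsplit : ∀ n (σ : Fin n → Bool),
      y n σ = y (n + 1) (Fin.snoc σ false) + y (n + 1) (Fin.snoc σ true))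
    (hnorm1 : ∀ n σ, ‖y n σ‖ ≤ 1)
    (n : ℕ) (c : (Fin n → Bool) → ℝ) (z : (Fin n → Bool) → X)
    (hz0 : ∀ σ, 0 ≤ z σ) (hzy : ∀ σ, z σ ≤ y n σ) {C : ℝ} (hC : ∀ σ, |c σ| ≤ C) :
    ‖∑ σ : Fin n → Bool, c σ • z σ‖ ≤ C := by
  have hC0 : 0 ≤ C := le_trans (abs_nonneg _) (hC default)
  have hy0 : (0:X) ≤ y 0 default := by
    have := my_sum_total y hsplit n
    rw [← this]
    exact Finset.sum_nonneg fun σ _ => le_trans (hz0 σ) (hzy σ)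
  have h1 : |∑ σ : Fin n → Bool, c σ • z σ| ≤ C • y 0 default := by
    calc |∑ σ : Fin n → Bool, c σ • z σ| ≤ ∑ σ : Fin n → Bool, |c σ • z σ| :=
          my_abs_sum_le _ _
      _ = ∑ σ : Fin n → Bool, |c σ| • z σ := by
          apply Finset.sum_congr rfl
          intro σ _
          exact my_abs_smul (hz0 σ)
      _ ≤ ∑ σ : Fin n → Bool, C • y n σ := by
          apply Finset.sum_le_sum
          intro σ _
          exact le_trans (my_smul_mono_left (hz0 σ) (hC σ)) (my_smul_mono_right hC0 (hzy σ))
      _ = C • ∑ σ : Fin n → Bool, y n σ := by rw [Finset.smul_sum]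
      _ = C • y 0 default := by rw [my_sum_total y hsplit n]
  have h2 : ‖∑ σ : Fin n → Bool, c σ • z σ‖ ≤ ‖C • y 0 default‖ := by
    apply HasSolidNorm.solid
    rwa [abs_of_nonneg (my_smul_nonneg hC0 hy0)]
  calc ‖∑ σ : Fin n → Bool, c σ • z σ‖ ≤ ‖C • y 0 default‖ := h2
    _ = |C| * ‖y 0 default‖ := by rw [norm_smul, Real.norm_eq_abs]
    _ ≤ C * 1 := by
        rw [abs_of_nonneg hC0]
        exact mul_le_mul_of_nonneg_left (hnorm1 0 default) hC0
    _ = C := mul_one C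

/-- Main lower bound, per index. -/
lemma my_norm_sum_ge
    (hpos : ∀ n σ, 0 ≤ y n σ)
    (hdisj : ∀ n (σ τ : Fin n → Bool), σ ≠ τ → y n σ ⊓ y n τ = 0)
    {δ : ℝ} (hδy : ∀ n σ, δ ≤ ‖y n σ‖)
    (n : ℕ) (a : (Fin n → Bool) → ℝ) (τ : Fin n → Bool) :
    δ * |a τ| ≤ ‖∑ σ : Fin n → Bool, a σ • y n σ‖ := by
  classical
  set S := ∑ σ : Fin n → Bool, a σ • y n σ with hS
  set v := ∑ σ ∈ Finset.univ.erase τ, a σ • y n σ with hv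
  have hsplit' : a τ • y n τ + v = S := by
    rw [hS, hv]
    exact Finset.add_sum_erase Finset.univ (fun σ => a σ • y n σ) (Finset.mem_univ τ)
  -- disjointness
  have hw : (|a τ| • y n τ) ⊓ (∑ σ ∈ Finset.univ.erase τ, |a σ| • y n σ) = 0 := by
    refine my_inf_sum_zero _ (my_smul_nonneg (abs_nonneg _) (hpos n τ))
      (fun σ _ => my_smul_nonneg (abs_nonneg _) (hpos n σ)) (fun σ hσ => ?_)
    have hστ : τ ≠ σ := fun h => (Finset.mem_erase.1 hσ).1 h.symm
    exact my_inf_smul_zero (hpos n τ) (hpos n σ) (hdisj n τ σ hστ) (abs_nonneg _) (abs_nonneg _)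
  have hvabs : |v| ≤ ∑ σ ∈ Finset.univ.erase τ, |a σ| • y n σ := by
    calc |v| ≤ ∑ σ ∈ Finset.univ.erase τ, |a σ • y n σ| := my_abs_sum_le _ _
      _ = ∑ σ ∈ Finset.univ.erase τ, |a σ| • y n σ := by
          apply Finset.sum_congr rfl
          intro σ _
          exact my_abs_smul (hpos n σ)
  have hdisj2 : |a τ • y n τ| ⊓ |v| = 0 := by
    rw [my_abs_smul (hpos n τ)]
    have h1 : (|a τ| • y n τ) ⊓ |v| ≤ (|a τ| • y n τ)
        ⊓ (∑ σ ∈ Finset.univ.erase τ, |a σ| • y n σ) := inf_le_inf_left _ hvabs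
    rw [hw] at h1
    exact le_antisymm h1 (le_inf (my_smul_nonneg (abs_nonneg _) (hpos n τ)) (abs_nonneg _))
  have habs : |S| = |a τ • y n τ| + |v| := by
    rw [← hsplit']
    exact my_abs_add_disjoint hdisj2
  have h3 : |a τ • y n τ| ≤ |S| := by
    rw [habs]
    exact le_add_of_nonneg_right (abs_nonneg _)
  have h4 : ‖a τ • y n τ‖ ≤ ‖S‖ := by
    exact HasSolidNorm.solid h3
  calc δ * |a τ| = |a τ| * δ := mul_comm _ _
    _ ≤ |a τ| * ‖y n τ‖ := mul_le_mul_of_nonneg_left (hδy n τ) (abs_nonneg _)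
    _ = ‖a τ • y n τ‖ := by rw [norm_smul, Real.norm_eq_abs]
    _ ≤ ‖S‖ := h4

end TreeHelpers

noncomputable section SupAndUnif

variable {X : Type} [NormedAddCommGroup X] [Lattice X] [HasSolidNorm X]
  [IsOrderedAddMonoid X] [NormedSpace ℝ X]
  (y : ∀ n : ℕ, (Fin n → Bool) → X)

lemma my_real_sup_sub (r : ℝ) : (0 ⊔ r) - (0 ⊔ (-r)) = r := by
  rcases le_total 0 r with h | h
  · rw [sup_of_le_right h, sup_of_le_left (neg_nonpos.2 h), sub_zero]
  · rw [sup_of_le_left h, sup_of_le_right (neg_nonneg.2 h), zero_sub, neg_neg]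

lemma my_posPart_sum
    (hpos : ∀ n σ, 0 ≤ y n σ)
    (hdisj : ∀ n (σ τ : Fin n → Bool), σ ≠ τ → y n σ ⊓ y n τ = 0)
    (n : ℕ) (c : (Fin n → Bool) → ℝ) :
    (0 : X) ⊔ (∑ σ : Fin n → Bool, c σ • y n σ)
      = ∑ σ : Fin n → Bool, (0 ⊔ c σ) • y n σ := by
  classical
  set P := ∑ σ : Fin n → Bool, (0 ⊔ c σ) • y n σ with hP
  set N := ∑ σ : Fin n → Bool, (0 ⊔ (- c σ)) • y n σ with hN
  have hsupnn : ∀ r : ℝ, 0 ≤ 0 ⊔ r := fun r => le_sup_left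
  have hP0 : (0:X) ≤ P := Finset.sum_nonneg fun σ _ => my_smul_nonneg (hsupnn _) (hpos n σ)
  have hN0 : (0:X) ≤ N := Finset.sum_nonneg fun σ _ => my_smul_nonneg (hsupnn _) (hpos n σ)
  have hsub : ∑ σ : Fin n → Bool, c σ • y n σ = P - N := by
    rw [hP, hN, ← Finset.sum_sub_distrib]
    apply Finset.sum_congr rfl
    intro σ _
    rw [← sub_smul, my_real_sup_sub]
  have hterm : ∀ τ σ : Fin n → Bool,
      ((0 ⊔ (- c τ)) • y n τ) ⊓ ((0 ⊔ c σ) • y n σ) = 0 := by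
    intro τ σ
    rcases eq_or_ne τ σ with rfl | hne
    · rcases le_total 0 (c τ) with h | h
      · rw [sup_of_le_left (neg_nonpos.2 h), zero_smul]
        exact inf_eq_left.2 (my_smul_nonneg (hsupnn _) (hpos n τ))
      · rw [sup_of_le_left h, zero_smul]
        exact inf_eq_right.2 (my_smul_nonneg (hsupnn _) (hpos n τ))
    · exact my_inf_smul_zero (hpos n τ) (hpos n σ) (hdisj n τ σ hne) (hsupnn _) (hsupnn _)
  have hPN : P ⊓ N = 0 := by
    rw [hP, hN, inf_comm]
    refine my_inf_sum_zero _ hN0 (fun σ _ => my_smul_nonneg (hsupnn _) (hpos n σ))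
      (fun σ _ => ?_)
    rw [inf_comm, hN]
    refine my_inf_sum_zero _ (my_smul_nonneg (hsupnn _) (hpos n σ))
      (fun τ _ => my_smul_nonneg (hsupnn _) (hpos n τ)) (fun τ _ => ?_)
    rw [inf_comm]
    exact hterm τ σ
  rw [hsub]
  have hNP : N ⊔ P = N + P := by
    have := inf_add_sup N P
    rw [inf_comm, hPN, zero_add] at this
    exact this
  calc (0:X) ⊔ (P - N) = (N - N) ⊔ (P - N) := by rw [sub_self]
    _ = (N ⊔ P) - N := by
        rw [sub_eq_add_neg, sub_eq_add_neg, sub_eq_add_neg, ← sup_add]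
    _ = P := by rw [hNP, add_sub_cancel_left]

lemma my_sum_sup
    (hpos : ∀ n σ, 0 ≤ y n σ)
    (hdisj : ∀ n (σ τ : Fin n → Bool), σ ≠ τ → y n σ ⊓ y n τ = 0)
    (n : ℕ) (a b : (Fin n → Bool) → ℝ) :
    (∑ σ : Fin n → Bool, a σ • y n σ) ⊔ (∑ σ : Fin n → Bool, b σ • y n σ)
      = ∑ σ : Fin n → Bool, (a σ ⊔ b σ) • y n σ := by
  set A := ∑ σ : Fin n → Bool, a σ • y n σ with hA
  set B := ∑ σ : Fin n → Bool, b σ • y n σ with hB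
  have hBA : B - A = ∑ σ : Fin n → Bool, (b σ - a σ) • y n σ := by
    rw [hA, hB, ← Finset.sum_sub_distrib]
    exact Finset.sum_congr rfl fun σ _ => (sub_smul _ _ _).symm
  calc A ⊔ B = (A + 0) ⊔ (A + (B - A)) := by rw [add_zero, add_sub_cancel]
    _ = A + (0 ⊔ (B - A)) := (add_sup _ _ _).symm
    _ = A + ∑ σ : Fin n → Bool, (0 ⊔ (b σ - a σ)) • y n σ := by
        rw [hBA, my_posPart_sum y hpos hdisj]
    _ = ∑ σ : Fin n → Bool, (a σ + (0 ⊔ (b σ - a σ))) • y n σ := by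
        rw [hA, ← Finset.sum_add_distrib]
        exact Finset.sum_congr rfl fun σ _ => (add_smul _ _ _).symm
    _ = ∑ σ : Fin n → Bool, (a σ ⊔ b σ) • y n σ := by
        apply Finset.sum_congr rfl
        intro σ _
        congr 1
        rw [add_sup, add_zero, add_sub_cancel]

/-- Uniform continuity on the Cantor space. -/
lemma my_unif (f : C(Cantor, ℝ)) {ε : ℝ} (hε : 0 < ε) :
    ∃ N : ℕ, ∀ x z : Cantor, (∀ i < N, z i = x i) → |f x - f z| ≤ ε := by
  have hc : ∀ x : Cantor, ∃ n : ℕ, ∀ z, (∀ i < n, z i = x i) → |f z - f x| < ε / 2 := by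
    intro x
    have hU : IsOpen (f ⁻¹' Metric.ball (f x) (ε / 2)) :=
      f.continuous.isOpen_preimage _ Metric.isOpen_ball
    have hxU : x ∈ f ⁻¹' Metric.ball (f x) (ε / 2) := by
      simp [Metric.mem_ball, half_pos hε]
    obtain ⟨s, ⟨w, m, rfl⟩, hxs, hsU⟩ :=
      (PiNat.isTopologicalBasis_cylinders (fun _ : ℕ => Bool)).exists_subset_of_mem_open hxU hU
    refine ⟨m, fun z hz => ?_⟩
    have hzs : z ∈ PiNat.cylinder w m := by
      rw [← PiNat.mem_cylinder_iff_eq.1 hxs]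
      exact PiNat.mem_cylinder_iff.2 hz
    have := hsU hzs
    simpa [Metric.mem_ball, Real.dist_eq] using this
  choose nn hnn using hc
  obtain ⟨t, ht⟩ := isCompact_univ.elim_finite_subcover
    (fun x : Cantor => PiNat.cylinder x (nn x))
    (fun x => PiNat.isOpen_cylinder (E := fun _ => Bool) x (nn x))
    (fun x _ => Set.mem_iUnion.2 ⟨x, PiNat.self_mem_cylinder x (nn x)⟩)
  refine ⟨t.sup nn, fun x z hxz => ?_⟩
  obtain ⟨w, hwt, hxw⟩ : ∃ w ∈ t, x ∈ PiNat.cylinder w (nn w) := by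
    have := ht (Set.mem_univ x)
    simpa using this
  have hzw : z ∈ PiNat.cylinder w (nn w) := by
    intro i hi
    rw [hxz i (lt_of_lt_of_le hi (Finset.le_sup hwt))]
    exact hxw i hi
  have h1 : |f x - f w| < ε / 2 := hnn w x (fun i hi => hxw i hi)
  have h2 : |f z - f w| < ε / 2 := hnn w z (fun i hi => hzw i hi)
  calc |f x - f z| = |(f x - f w) - (f z - f w)| := by ring_nf
    _ ≤ |f x - f w| + |f z - f w| := abs_sub _ _
    _ ≤ ε := by linarith

end SupAndUnif

noncomputable section OperatorHelpers

open Classical in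
/-- Indicator of the cylinder determined by `σ`. -/
def chiFn (n : ℕ) (σ : Fin n → Bool) : C(Cantor, ℝ) where
  toFun := fun x => if (fun i : Fin n => x i) = σ then 1 else 0
  continuous_toFun := by
    have h1 : Continuous (fun x : Cantor => (fun i : Fin n => x (i : ℕ))) :=
      continuous_pi fun i => continuous_apply _
    exact (continuous_of_discreteTopology
      (f := fun v : Fin n → Bool => if v = σ then (1:ℝ) else 0)).comp h1

variable {X : Type} [NormedAddCommGroup X] [Lattice X] [HasSolidNorm X]
  [IsOrderedAddMonoid X] [NormedSpace ℝ X]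
  (y : ∀ n : ℕ, (Fin n → Bool) → X)

/-- The approximating operators. -/
def gApp (n : ℕ) (f : C(Cantor, ℝ)) : X := ∑ σ : Fin n → Bool, f (extFn n σ) • y n σ

lemma extFn_proj_agree {n m : ℕ} (h : n ≤ m) (τ : Fin m → Bool) {i : ℕ} (hi : i < n) :
    extFn n (projFn h τ) i = extFn m τ i := by
  rw [extFn, extFn, dif_pos hi, dif_pos (lt_of_lt_of_le hi h)]
  rfl

lemma my_gApp_norm_le
    (hpos : ∀ n σ, 0 ≤ y n σ)
    (hsplit : ∀ n (σ : Fin n → Bool),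
      y n σ = y (n + 1) (Fin.snoc σ false) + y (n + 1) (Fin.snoc σ true))
    (hnorm1 : ∀ n σ, ‖y n σ‖ ≤ 1) (n : ℕ) (f : C(Cantor, ℝ)) :
    ‖gApp y n f‖ ≤ ‖f‖ := by
  apply my_norm_sum_le y hsplit hnorm1 n _ (y n) (hpos n) (fun _ => le_rfl)
  intro σ
  rw [← Real.norm_eq_abs]
  exact f.norm_coe_le_norm _

lemma my_gApp_diff
    (hsplit : ∀ n (σ : Fin n → Bool),
      y n σ = y (n + 1) (Fin.snoc σ false) + y (n + 1) (Fin.snoc σ true))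
    {n m : ℕ} (h : n ≤ m) (f : C(Cantor, ℝ)) :
    gApp y m f - gApp y n f
      = ∑ τ : Fin m → Bool, (f (extFn m τ) - f (extFn n (projFn h τ))) • y m τ := by
  rw [gApp, gApp, my_sum_proj y hsplit h (fun σ => f (extFn n σ)), ← Finset.sum_sub_distrib]
  exact Finset.sum_congr rfl fun τ _ => (sub_smul _ _ _).symm

lemma my_gApp_cauchy
    (hpos : ∀ n σ, 0 ≤ y n σ)
    (hsplit : ∀ n (σ : Fin n → Bool),
      y n σ = y (n + 1) (Fin.snoc σ false) + y (n + 1) (Fin.snoc σ true))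
    (hnorm1 : ∀ n σ, ‖y n σ‖ ≤ 1) (f : C(Cantor, ℝ)) :
    CauchySeq (fun n => gApp y n f) := by
  rw [Metric.cauchySeq_iff]
  intro ε hε
  obtain ⟨N, hN⟩ := my_unif f (half_pos hε)
  have key : ∀ {n m : ℕ}, N ≤ n → n ≤ m → dist (gApp y m f) (gApp y n f) ≤ ε / 2 := by
    intro n m hNn hnm
    rw [dist_eq_norm, my_gApp_diff y hsplit hnm f]
    apply my_norm_sum_le y hsplit hnorm1 m _ (y m) (hpos m) (fun _ => le_rfl)
    intro τ
    apply hN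
    intro i hi
    exact extFn_proj_agree hnm τ (lt_of_lt_of_le hi hNn)
  refine ⟨N, fun m hm n hn => ?_⟩
  rcases le_total n m with h | h
  · exact lt_of_le_of_lt (key hn h) (half_lt_self hε)
  · rw [dist_comm]
    exact lt_of_le_of_lt (key hm h) (half_lt_self hε)

/-- The limit operator, as a bare function. -/
def Tfun (f : C(Cantor, ℝ)) : X := limUnder Filter.atTop (fun n => gApp y n f)

lemma my_Tfun_tendsto
    (hpos : ∀ n σ, 0 ≤ y n σ)
    (hsplit : ∀ n (σ : Fin n → Bool),
      y n σ = y (n + 1) (Fin.snoc σ false) + y (n + 1) (Fin.snoc σ true))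
    (hnorm1 : ∀ n σ, ‖y n σ‖ ≤ 1) [CompleteSpace X] (f : C(Cantor, ℝ)) :
    Filter.Tendsto (fun n => gApp y n f) Filter.atTop (𝓝 (Tfun y f)) :=
  (my_gApp_cauchy y hpos hsplit hnorm1 f).tendsto_limUnder

lemma my_gApp_add (n : ℕ) (f g : C(Cantor, ℝ)) :
    gApp y n (f + g) = gApp y n f + gApp y n g := by
  rw [gApp, gApp, gApp, ← Finset.sum_add_distrib]
  apply Finset.sum_congr rfl
  intro σ _
  rw [ContinuousMap.add_apply, add_smul]

lemma my_gApp_smul (n : ℕ) (r : ℝ) (f : C(Cantor, ℝ)) :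
    gApp y n (r • f) = r • gApp y n f := by
  rw [gApp, gApp, Finset.smul_sum]
  apply Finset.sum_congr rfl
  intro σ _
  rw [ContinuousMap.smul_apply, smul_smul]
  rfl

lemma my_gApp_sup
    (hpos : ∀ n σ, 0 ≤ y n σ)
    (hdisj : ∀ n (σ τ : Fin n → Bool), σ ≠ τ → y n σ ⊓ y n τ = 0)
    (n : ℕ) (f g : C(Cantor, ℝ)) :
    gApp y n (f ⊔ g) = gApp y n f ⊔ gApp y n g := by
  rw [gApp, gApp, gApp, my_sum_sup y hpos hdisj]
  apply Finset.sum_congr rfl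
  intro σ _
  congr 1

lemma my_gApp_chi
    (hsplit : ∀ n (σ : Fin n → Bool),
      y n σ = y (n + 1) (Fin.snoc σ false) + y (n + 1) (Fin.snoc σ true))
    {n m : ℕ} (h : n ≤ m) (σ : Fin n → Bool) :
    gApp y m (chiFn n σ) = y n σ := by
  classical
  have hval : ∀ τ : Fin m → Bool,
      chiFn n σ (extFn m τ) = if projFn h τ = σ then (1:ℝ) else 0 := by
    intro τ
    have : (fun i : Fin n => extFn m τ (i : ℕ)) = projFn h τ := by
      funext i
      rw [extFn, dif_pos (lt_of_lt_of_le i.isLt h)]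
      rfl
    show (if (fun i : Fin n => extFn m τ (i : ℕ)) = σ then (1:ℝ) else 0) = _
    rw [this]
  have hsum : ∑ σ' : Fin n → Bool, (if σ' = σ then (1:ℝ) else 0) • y n σ' = y n σ := by
    have : ∀ σ' : Fin n → Bool, (if σ' = σ then (1:ℝ) else 0) • y n σ'
        = if σ' = σ then y n σ' else 0 := by
      intro σ'
      split <;> simp
    rw [Finset.sum_congr rfl fun σ' _ => this σ', Finset.sum_ite_eq' Finset.univ σ (fun σ' => y n σ')]
    simp
  rw [gApp, Finset.sum_congr rfl fun τ _ => by rw [hval τ]]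
  rw [← my_sum_proj y hsplit h (fun σ' => if σ' = σ then (1:ℝ) else 0)]
  exact hsum

end OperatorHelpers
/-- Let `X` be a Banach lattice, `0 < δ ≤ 1`, and `(y σ)` a dyadic tree of pairwise
disjoint positive vectors with `y σ = y (σ⌢0) + y (σ⌢1)` and `δ ≤ ‖y σ‖ ≤ 1`. Then
`δ · max |a_σ| ≤ ‖Σ a_σ y_σ‖ ≤ max |a_σ|` for all scalars, and the closed sublattice
of `X` generated by all the `y σ` is lattice isomorphic to `C(Δ)`. -/
theorem dyadic_tree_gives_C_Delta
    (X : Type) [NormedAddCommGroup X] [Lattice X] [HasSolidNorm X]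
      [IsOrderedAddMonoid X] [NormedSpace ℝ X] [CompleteSpace X]
    (δ : ℝ) (hδ0 : 0 < δ) (hδ1 : δ ≤ 1)
    (y : ∀ n : ℕ, (Fin n → Bool) → X)
    (hpos : ∀ n σ, 0 ≤ y n σ)
    (hdisj : ∀ n (σ τ : Fin n → Bool), σ ≠ τ → y n σ ⊓ y n τ = 0)
    (hsplit : ∀ n (σ : Fin n → Bool),
      y n σ = y (n + 1) (Fin.snoc σ false) + y (n + 1) (Fin.snoc σ true))
    (hnorm : ∀ n σ, δ ≤ ‖y n σ‖ ∧ ‖y n σ‖ ≤ 1) :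
    (∀ n (a : (Fin n → Bool) → ℝ),
      δ * (⨆ σ, |a σ|) ≤ ‖∑ σ : Fin n → Bool, a σ • y n σ‖ ∧
      ‖∑ σ : Fin n → Bool, a σ • y n σ‖ ≤ ⨆ σ, |a σ|) ∧
    ∃ T : C(Cantor, ℝ) →L[ℝ] X,
      (∀ f g : C(Cantor, ℝ), T (f ⊔ g) = T f ⊔ T g) ∧
      (∃ c : ℝ, 0 < c ∧ ∀ f : C(Cantor, ℝ), c * ‖f‖ ≤ ‖T f‖) ∧
      LinearMap.range (T : C(Cantor, ℝ) →ₗ[ℝ] X) =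
        sInf {S : Submodule ℝ X | IsClosed (S : Set X) ∧
          (∀ a ∈ S, ∀ b ∈ S, a ⊔ b ∈ S ∧ a ⊓ b ∈ S) ∧
          ∀ n σ, y n σ ∈ S} := by
  classical
  have hnorm1 : ∀ n σ, ‖y n σ‖ ≤ 1 := fun n σ => (hnorm n σ).2
  have hδy : ∀ n σ, δ ≤ ‖y n σ‖ := fun n σ => (hnorm n σ).1
  constructor
  · -- the norm estimates
    intro n a
    have hbdd : BddAbove (Set.range fun σ : Fin n → Bool => |a σ|) :=
      (Set.finite_range _).bddAbove
    constructor
    · have hle : (⨆ σ, |a σ|) ≤ ‖∑ σ : Fin n → Bool, a σ • y n σ‖ / δ := by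
        apply ciSup_le
        intro τ
        rw [le_div_iff₀ hδ0, mul_comm]
        exact my_norm_sum_ge y hpos hdisj hδy n a τ
      calc δ * (⨆ σ, |a σ|) ≤ δ * (‖∑ σ : Fin n → Bool, a σ • y n σ‖ / δ) :=
            mul_le_mul_of_nonneg_left hle hδ0.le
        _ = ‖∑ σ : Fin n → Bool, a σ • y n σ‖ := by
            rw [mul_comm, div_mul_cancel₀ _ (ne_of_gt hδ0)]
    · exact my_norm_sum_le y hsplit hnorm1 n a (y n) (hpos n) (fun _ => le_rfl)
        (fun σ => le_ciSup hbdd σ)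
  · -- the operator
    have htendL : ∀ f, Filter.Tendsto (fun n => gApp y n f) Filter.atTop (𝓝 (Tfun y f)) :=
      fun f => my_Tfun_tendsto y hpos hsplit hnorm1 f
    let L : C(Cantor, ℝ) →ₗ[ℝ] X :=
      { toFun := Tfun y
        map_add' := fun f g => by
          refine tendsto_nhds_unique (htendL (f + g)) ?_
          exact ((htendL f).add (htendL g)).congr fun n => (my_gApp_add y n f g).symm
        map_smul' := fun r f => by
          refine tendsto_nhds_unique (htendL (r • f)) ?_
          exact ((htendL f).const_smul r).congr fun n => (my_gApp_smul y n r f).symm }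
    have hLbound : ∀ f, ‖L f‖ ≤ 1 * ‖f‖ := by
      intro f
      rw [one_mul]
      exact le_of_tendsto (htendL f).norm
        (Filter.Eventually.of_forall fun n => my_gApp_norm_le y hpos hsplit hnorm1 n f)
    let T : C(Cantor, ℝ) →L[ℝ] X := LinearMap.mkContinuous L 1 hLbound
    have htend : ∀ f, Filter.Tendsto (fun n => gApp y n f) Filter.atTop (𝓝 (T f)) := htendL
    have hTsup : ∀ f g, T (f ⊔ g) = T f ⊔ T g := by
      intro f g
      refine tendsto_nhds_unique (htend (f ⊔ g)) ?_
      exact ((htend f).sup_nhds (htend g)).congr fun n => (my_gApp_sup y hpos hdisj n f g).symm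
    have hTinf : ∀ f g, T (f ⊓ g) = T f ⊓ T g := by
      intro f g
      have h1 : f ⊓ g = f + g - f ⊔ g := eq_sub_of_add_eq (inf_add_sup f g)
      rw [h1, map_sub, map_add, hTsup f g]
      exact (eq_sub_of_add_eq (inf_add_sup (T f) (T g))).symm
    have hTchi : ∀ n σ, T (chiFn n σ) = y n σ := by
      intro n σ
      refine tendsto_nhds_unique (htend (chiFn n σ)) ?_
      refine Filter.Tendsto.congr' ?_ tendsto_const_nhds
      filter_upwards [Filter.eventually_ge_atTop n] with m hm
      exact (my_gApp_chi y hsplit hm σ).symm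
    have hlower : ∀ f, δ * ‖f‖ ≤ ‖T f‖ := by
      intro f
      have hx : ∀ x : Cantor, δ * |f x| ≤ ‖T f‖ := by
        intro x
        have hxx : Filter.Tendsto (fun n => extFn n (fun i : Fin n => x (i : ℕ)))
            Filter.atTop (𝓝 x) := by
          rw [tendsto_pi_nhds]
          intro i
          refine Filter.Tendsto.congr' ?_ (tendsto_const_nhds (x := x i))
          filter_upwards [Filter.eventually_ge_atTop (i + 1)] with n hn
          rw [extFn, dif_pos (by omega : i < n)]
        have hσ : Filter.Tendsto (fun n => f (extFn n (fun i : Fin n => x (i : ℕ))))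
            Filter.atTop (𝓝 (f x)) := (f.continuous.tendsto x).comp hxx
        have h1 : Filter.Tendsto (fun n => δ * |f (extFn n (fun i : Fin n => x (i : ℕ)))|)
            Filter.atTop (𝓝 (δ * |f x|)) := hσ.abs.const_mul δ
        have h2 : Filter.Tendsto (fun n => ‖gApp y n f‖) Filter.atTop (𝓝 ‖T f‖) :=
          (htend f).norm
        exact le_of_tendsto_of_tendsto' h1 h2
          (fun n => my_norm_sum_ge y hpos hdisj hδy n (fun σ => f (extFn n σ)) _)
      have hfle : ‖f‖ ≤ ‖T f‖ / δ := by
        rw [f.norm_le (div_nonneg (norm_nonneg _) hδ0.le)]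
        intro x
        rw [Real.norm_eq_abs, le_div_iff₀ hδ0, mul_comm]
        exact hx x
      calc δ * ‖f‖ ≤ δ * (‖T f‖ / δ) := mul_le_mul_of_nonneg_left hfle hδ0.le
        _ = ‖T f‖ := by rw [mul_comm, div_mul_cancel₀ _ (ne_of_gt hδ0)]
    refine ⟨T, hTsup, ⟨δ, hδ0, hlower⟩, ?_⟩
    apply le_antisymm
    · -- range ≤ sInf
      intro x hx
      obtain ⟨f, rfl⟩ := LinearMap.mem_range.1 hx
      rw [Submodule.mem_sInf]
      intro S hS
      apply hS.1.mem_of_tendsto (htend f)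
      filter_upwards with n
      exact Submodule.sum_mem S fun σ _ => Submodule.smul_mem S _ (hS.2.2 n σ)
    · -- sInf ≤ range
      apply sInf_le
      refine ⟨?_, ?_, ?_⟩
      · have hrange : ((LinearMap.range (T : C(Cantor, ℝ) →ₗ[ℝ] X)) : Set X)
            = Set.range T := by
          ext z
          simp [LinearMap.mem_range]
        rw [hrange]
        have hbound : ∀ f, ‖f‖ ≤ (⟨δ⁻¹, inv_nonneg.2 hδ0.le⟩ : NNReal) * ‖T f‖ := by
          intro f
          have := hlower f
          rw [← le_div_iff₀' hδ0] at this
          calc ‖f‖ ≤ ‖T f‖ / δ := this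
            _ = (⟨δ⁻¹, inv_nonneg.2 hδ0.le⟩ : NNReal) * ‖T f‖ := by
                rw [div_eq_inv_mul]
        exact (T.antilipschitz_of_bound hbound).isClosed_range T.uniformContinuous
      · rintro a ha b hb
        obtain ⟨f, rfl⟩ := LinearMap.mem_range.1 ha
        obtain ⟨g, rfl⟩ := LinearMap.mem_range.1 hb
        exact ⟨LinearMap.mem_range.2 ⟨f ⊔ g, hTsup f g⟩,
          LinearMap.mem_range.2 ⟨f ⊓ g, hTinf f g⟩⟩
      · exact fun n σ => LinearMap.mem_range.2 ⟨chiFn n σ, hTchi n σ⟩
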